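/- Fix a directed acyclic graph, a quasi-flow f, and a linear order ⊵ on the edge set E. Then there exists a swap-progressive path decomposition of f, and it is unique. -/

import Mathlib

open scoped Classical

namespace StmtDAG

variable {N E : Type*} [Fintype N] [Fintype E] [DecidableEq N] [DecidableEq E]

/-- `(src, tgt, s, t)` describes a directed acyclic graph with finite node type `N` and
finite edge type `E` (parallel edges are allowed, since `E` is an abstract type with
endpoint maps): there is no directed cycle, `s` is the unique node with no incoming edge
(the source), and `t` is the unique node with no outgoing edge (the sink). -/
def IsDAG (src tgt : E → N) (s t : N) : Prop :=
  (∀ a : N, ¬ Relation.TransGen (fun a b => ∃ e, src e = a ∧ tgt e = b) a a) ∧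
  (∀ e, tgt e ≠ s) ∧ (∀ e, src e ≠ t) ∧
  (∀ n, (∀ e, tgt e ≠ n) → n = s) ∧
  (∀ n, (∀ e, src e ≠ n) → n = t)

variable (src tgt : E → N) (s t : N)

/-- A path from `s` to `t`: a nonempty list of consecutive edges starting at `s` and
ending at `t`.  (In a DAG these are in bijective correspondence with the edge *sets* in
which `s` and `t` each appear exactly once and every other node appearing at all appears
exactly once as a head and once as a tail.) -/
structure GPath where
  /-- the edges of the path, in order from the source to the sink -/
  edges : List E
  ne : edges ≠ []
  chain : edges.Chain' fun e f => tgt e = src f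
  first : src (edges.head ne) = s
  last : tgt (edges.getLast ne) = t

/-- A quasi-flow: a nonnegative edge weighting such that, at every node other than the
source and the sink, total in-flow equals total out-flow. -/
def IsQuasiFlow (f : E → ℝ) : Prop :=
  (∀ e, 0 ≤ f e) ∧
  ∀ n : N, n ≠ s → n ≠ t →
    (∑ e : E, if tgt e = n then f e else 0) = (∑ e : E, if src e = n then f e else 0)

/-- `π` is a path decomposition of the quasi-flow `f`: a nonnegative weighting of paths
whose induced edge weights recover `f`. -/
def IsPathDecomp (f : E → ℝ) (π : GPath src tgt s t → ℝ) : Prop :=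
  (∀ P, 0 ≤ π P) ∧
  ∀ e : E, f e = ∑ᶠ P : GPath src tgt s t, if e ∈ P.edges then π P else 0

/-- `P.edges = a ++ b`, split exactly at the node `n`. -/
def SplitsAt (P : GPath src tgt s t) (n : N) (a b : List E) : Prop :=
  P.edges = a ++ b ∧ (∀ h : b ≠ [], src (b.head h) = n) ∧ (b = [] → n = t)

/-- `(Q₁, Q₂)` are the `n`-conjugates of the pair `(P₁, P₂)`, both of which pass through
the node `n`: `Q₁` follows `P₁` up to `n` and `P₂` thereafter, and vice versa. -/
def IsConjAt (n : N) (P₁ P₂ Q₁ Q₂ : GPath src tgt s t) : Prop :=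
  ∃ a₁ b₁ a₂ b₂ : List E,
    SplitsAt src tgt s t P₁ n a₁ b₁ ∧ SplitsAt src tgt s t P₂ n a₂ b₂ ∧
    Q₁.edges = a₁ ++ b₂ ∧ Q₂.edges = a₂ ++ b₁

/-- The indicator (point mass) vector of a path. -/
noncomputable def indP (P₀ : GPath src tgt s t) : GPath src tgt s t → ℝ :=
  fun P => if P = P₀ then 1 else 0

/-- A Ryser swap: `1_{Q₁} + 1_{Q₂} - 1_{P₁} - 1_{P₂}` where `(Q₁, Q₂)` are the
`n`-conjugates of a pair `(P₁, P₂)` compatible at some node `n`. -/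
def IsRyserSwap (R : GPath src tgt s t → ℝ) : Prop :=
  ∃ (n : N) (P₁ P₂ Q₁ Q₂ : GPath src tgt s t),
    IsConjAt src tgt s t n P₁ P₂ Q₁ Q₂ ∧
    R = indP src tgt s t Q₁ + indP src tgt s t Q₂ -
          indP src tgt s t P₁ - indP src tgt s t P₂

/-- The Ryser subspace: the linear span of all Ryser swaps. -/
noncomputable def RyserSub : Submodule ℝ (GPath src tgt s t → ℝ) :=
  Submodule.span ℝ {R | IsRyserSwap src tgt s t R}

/-- `π` is a probability distribution on the path set. -/
def IsDistP (π : GPath src tgt s t → ℝ) : Prop :=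
  (∀ P, 0 ≤ π P) ∧ ∑ᶠ P : GPath src tgt s t, π P = 1


/-- `π` is a swap-progressive path decomposition with respect to the linear order `tri`
on edges (`tri e₁ e₂` means `e₁ ⊵ e₂`): its support can be enumerated `P_1, …, P_K` so
that whenever `P_i` and `P_j` both pass through a node `n` and `i > j`, the edge of `P_i`
leaving `n` is `⊵`-greater than or equal to the edge of `P_j` leaving `n`. -/
def SwapProgG (tri : E → E → Prop) (π : GPath src tgt s t → ℝ) : Prop :=
  ∃ (K : ℕ) (en : Fin K → GPath src tgt s t), Function.Injective en ∧
    Set.range en = {P | π P ≠ 0} ∧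
    ∀ i j : Fin K, j < i → ∀ (n : N) (e₁ e₂ : E),
      e₁ ∈ (en i).edges → e₂ ∈ (en j).edges → src e₁ = n → src e₂ = n → tri e₁ e₂

set_option linter.unusedSectionVars false
set_option maxHeartbeats 1000000

/-- the step relation of the graph -/
def Step (a b : N) : Prop := ∃ e, src e = a ∧ tgt e = b

variable {src tgt s t}

lemma chain_pairwise_src {l : List E} (hl : l.Chain' fun e f => tgt e = src f) :
    l.Pairwise fun e e' => Relation.TransGen (Step src tgt) (src e) (src e') := by
  haveI : IsTrans E fun e e' => Relation.TransGen (Step src tgt) (src e) (src e') :=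
    ⟨fun _ _ _ h h' => h.trans h'⟩
  exact List.isChain_iff_pairwise.mp (hl.imp fun {a b} h =>
    Relation.TransGen.single ⟨a, rfl, h⟩)

lemma chain_pairwise_tgt {l : List E} (hl : l.Chain' fun e f => tgt e = src f) :
    l.Pairwise fun e e' => Relation.TransGen (Step src tgt) (tgt e) (tgt e') := by
  haveI : IsTrans E fun e e' => Relation.TransGen (Step src tgt) (tgt e) (tgt e') :=
    ⟨fun _ _ _ h h' => h.trans h'⟩
  exact List.isChain_iff_pairwise.mp (hl.imp fun {a b} h =>
    Relation.TransGen.single ⟨b, h.symm, rfl⟩)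

section DAG
variable (hdag : IsDAG src tgt s t)
include hdag

lemma acyc : ∀ a : N, ¬ Relation.TransGen (Step src tgt) a a := hdag.1

/-- within a chain, edges with the same source are equal -/
lemma src_injOn {l : List E} (hl : l.Chain' fun e f => tgt e = src f)
    {e e' : E} (he : e ∈ l) (he' : e' ∈ l) (h : src e = src e') : e = e' := by
  by_contra hne
  rcases List.mem_iff_get.mp he with ⟨i, rfl⟩
  rcases List.mem_iff_get.mp he' with ⟨j, rfl⟩
  have hp := List.pairwise_iff_get.mp (chain_pairwise_src hl)
  rcases lt_trichotomy i j with hij | hij | hij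
  · exact acyc hdag _ (h ▸ hp i j hij)
  · exact hne (by rw [hij])
  · exact acyc hdag _ (h ▸ hp j i hij)

/-- within a chain, edges with the same target are equal -/
lemma tgt_injOn {l : List E} (hl : l.Chain' fun e f => tgt e = src f)
    {e e' : E} (he : e ∈ l) (he' : e' ∈ l) (h : tgt e = tgt e') : e = e' := by
  by_contra hne
  rcases List.mem_iff_get.mp he with ⟨i, rfl⟩
  rcases List.mem_iff_get.mp he' with ⟨j, rfl⟩
  have hp := List.pairwise_iff_get.mp (chain_pairwise_tgt hl)
  rcases lt_trichotomy i j with hij | hij | hij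
  · exact acyc hdag _ (h ▸ hp i j hij)
  · exact hne (by rw [hij])
  · exact acyc hdag _ (h ▸ hp j i hij)

lemma chain_nodup {l : List E} (hl : l.Chain' fun e f => tgt e = src f) : l.Nodup :=
  (chain_pairwise_src hl).imp fun {a b} h => by
    rintro rfl; exact acyc hdag _ h

lemma gpath_finite : Finite (GPath src tgt s t) := by
  apply Finite.of_injective (fun P : GPath src tgt s t =>
    (⟨P.edges, chain_nodup hdag P.chain⟩ : {l : List E // l.Nodup}))
  intro P Q h
  have : P.edges = Q.edges := congrArg Subtype.val h
  cases P; cases Q; cases this; rfl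

omit hdag in
lemma gpath_ext {P Q : GPath src tgt s t} (h : P.edges = Q.edges) : P = Q := by
  cases P; cases Q; cases h; rfl

/-- an interior node entered by a path is also left by it -/
lemma exists_src_of_tgt {P : GPath src tgt s t} {n : N} (hn : n ≠ t)
    {e : E} (he : e ∈ P.edges) (ht : tgt e = n) : ∃ e', e' ∈ P.edges ∧ src e' = n := by
  rcases List.mem_iff_get.mp he with ⟨⟨i, hi⟩, rfl⟩
  rcases lt_or_eq_of_le (Nat.succ_le_of_lt hi) with h1 | h1
  · refine ⟨P.edges.get ⟨i+1, h1⟩, List.get_mem _ _, ?_⟩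
    rw [← ht]
    exact (List.isChain_iff_getElem.mp P.chain i (by omega)).symm
  · exfalso; apply hn
    rw [← ht]
    have h2 := P.last
    rw [List.getLast_eq_getElem] at h2
    have h3 : (⟨i, hi⟩ : Fin P.edges.length) = ⟨P.edges.length - 1, by omega⟩ :=
      Fin.ext (by simp only [Fin.val_mk]; omega)
    rw [h3]
    exact h2

lemma exists_tgt_of_src {P : GPath src tgt s t} {n : N} (hn : n ≠ s)
    {e : E} (he : e ∈ P.edges) (hs : src e = n) : ∃ e', e' ∈ P.edges ∧ tgt e' = n := by
  rcases List.mem_iff_get.mp he with ⟨⟨i, hi⟩, rfl⟩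
  rcases Nat.eq_zero_or_pos i with h1 | h1
  · exfalso; apply hn
    rw [← hs]
    have h2 := P.first
    rw [List.head_eq_getElem_zero] at h2
    subst h1
    simpa using h2
  · obtain ⟨j, rfl⟩ : ∃ j, i = j + 1 := ⟨i - 1, by omega⟩
    refine ⟨P.edges.get ⟨j, by omega⟩, List.get_mem _ _, ?_⟩
    rw [← hs]
    exact List.isChain_iff_getElem.mp P.chain j (by omega)

end DAG

lemma exists_tri_min {tri : E → E → Prop} (htri : IsLinearOrder E tri)
    {S : Finset E} (h : S.Nonempty) : ∃ m ∈ S, ∀ x ∈ S, tri x m := by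
  haveI := htri
  induction S using Finset.cons_induction with
  | empty => exact absurd h (by simp)
  | cons a S ha ih =>
    rcases S.eq_empty_or_nonempty with rfl | hS
    · exact ⟨a, by simp, by intro x hx; simp at hx; subst hx; exact refl_of tri _⟩
    · obtain ⟨m, hm, hmin⟩ := ih hS
      rcases total_of tri a m with h1 | h1
      · refine ⟨m, by simp [hm], ?_⟩
        intro x hx
        rcases Finset.mem_cons.mp hx with rfl | hx
        exacts [h1, hmin x hx]
      · refine ⟨a, by simp, ?_⟩
        intro x hx
        rcases Finset.mem_cons.mp hx with rfl | hx
        exacts [refl_of tri x, trans_of tri (hmin x hx) h1]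

section WF
variable (hdag : IsDAG src tgt s t)
include hdag

lemma wf_fwd : WellFounded (fun a b : N => Relation.TransGen (Step src tgt) b a) := by
  haveI : IsTrans N (fun a b : N => Relation.TransGen (Step src tgt) b a) :=
    ⟨fun _ _ _ h h' => h'.trans h⟩
  haveI : IsIrrefl N (fun a b : N => Relation.TransGen (Step src tgt) b a) :=
    ⟨fun a h => hdag.1 a h⟩
  exact Finite.wellFounded_of_trans_of_irrefl _

lemma wf_bwd : WellFounded (Relation.TransGen (Step src tgt)) := by
  haveI : IsTrans N (Relation.TransGen (Step src tgt)) := ⟨fun _ _ _ h h' => h.trans h'⟩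
  haveI : IsIrrefl N (Relation.TransGen (Step src tgt)) := ⟨fun a h => hdag.1 a h⟩
  exact Finite.wellFounded_of_trans_of_irrefl _

variable {f : E → ℝ} (hf : IsQuasiFlow src tgt s t f)
include hf

lemma exists_out_pos {n : N} (hns : n ≠ s) (hnt : n ≠ t)
    {e : E} (he : tgt e = n) (hpos : 0 < f e) : ∃ e', src e' = n ∧ 0 < f e' := by
  have hin : 0 < ∑ e' : E, (if tgt e' = n then f e' else 0) := by
    have h1 : (if tgt e = n then f e else 0) ≤ ∑ e' : E, (if tgt e' = n then f e' else 0) :=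
      Finset.single_le_sum (f := fun e' => if tgt e' = n then f e' else 0)
        (fun i _ => by by_cases h : tgt i = n <;> simp [h, hf.1 i]) (Finset.mem_univ e)
    rw [if_pos he] at h1
    linarith
  rw [hf.2 n hns hnt] at hin
  by_contra hco
  push_neg at hco
  have h0 : ∑ e' : E, (if src e' = n then f e' else 0) = 0 := by
    refine Finset.sum_eq_zero fun e' _ => ?_
    split
    · next h => have := hco e' h; have := hf.1 e'; linarith
    · rfl
  rw [h0] at hin
  exact lt_irrefl 0 hin

lemma exists_in_pos {n : N} (hns : n ≠ s) (hnt : n ≠ t)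
    {e : E} (he : src e = n) (hpos : 0 < f e) : ∃ e', tgt e' = n ∧ 0 < f e' := by
  have hout : 0 < ∑ e' : E, (if src e' = n then f e' else 0) := by
    have h1 : (if src e = n then f e else 0) ≤ ∑ e' : E, (if src e' = n then f e' else 0) :=
      Finset.single_le_sum (f := fun e' => if src e' = n then f e' else 0)
        (fun i _ => by by_cases h : src i = n <;> simp [h, hf.1 i]) (Finset.mem_univ e)
    rw [if_pos he] at h1
    linarith
  rw [← hf.2 n hns hnt] at hout
  by_contra hco
  push_neg at hco
  have h0 : ∑ e' : E, (if tgt e' = n then f e' else 0) = 0 := by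
    refine Finset.sum_eq_zero fun e' _ => ?_
    split
    · next h => have := hco e' h; have := hf.1 e'; linarith
    · rfl
  rw [h0] at hout
  exact lt_irrefl 0 hout

lemma exists_start : ∀ n : N, (∃ e, src e = n ∧ 0 < f e) → ∃ e, src e = s ∧ 0 < f e := by
  intro n
  refine (wf_bwd hdag).induction
    (C := fun n => (∃ e, src e = n ∧ 0 < f e) → ∃ e, src e = s ∧ 0 < f e) n ?_
  rintro n IH ⟨e, he, hpos⟩
  by_cases hns : n = s
  · exact ⟨e, hns ▸ he, hpos⟩
  · have hnt : n ≠ t := he ▸ hdag.2.2.1 e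
    obtain ⟨e', he', hpos'⟩ := exists_in_pos hdag hf hns hnt he hpos
    exact IH (src e') (Relation.TransGen.single ⟨e', rfl, he'⟩) ⟨e', rfl, hpos'⟩

lemma greedy_walk {tri : E → E → Prop} (htri : IsLinearOrder E tri) :
    ∀ n : N, (∃ e, src e = n ∧ 0 < f e) →
    ∃ l : List E, ∃ hne : l ≠ [], (l.Chain' fun e f => tgt e = src f) ∧
      src (l.head hne) = n ∧ tgt (l.getLast hne) = t ∧
      (∀ e ∈ l, 0 < f e) ∧
      (∀ e ∈ l, ∀ e', src e' = src e → 0 < f e' → tri e' e) := by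
  intro n
  refine (wf_fwd hdag).induction
    (C := fun n => (∃ e, src e = n ∧ 0 < f e) →
      ∃ l : List E, ∃ hne : l ≠ [], (l.Chain' fun e f => tgt e = src f) ∧
        src (l.head hne) = n ∧ tgt (l.getLast hne) = t ∧
        (∀ e ∈ l, 0 < f e) ∧
        (∀ e ∈ l, ∀ e', src e' = src e → 0 < f e' → tri e' e)) n ?_
  intro n IH hn
  have hSne : (Finset.univ.filter fun e => src e = n ∧ 0 < f e).Nonempty := by
    obtain ⟨e, he, hpos⟩ := hn
    exact ⟨e, by simp [he, hpos]⟩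
  obtain ⟨m, hmS, hmin⟩ := exists_tri_min htri hSne
  simp only [Finset.mem_filter, Finset.mem_univ, true_and] at hmS
  have hmin' : ∀ e', src e' = n → 0 < f e' → tri e' m := fun e' h1 h2 =>
    hmin e' (by simp [h1, h2])
  by_cases hmt : tgt m = t
  · refine ⟨[m], by simp, List.IsChain.singleton m, by simpa using hmS.1, by simpa using hmt, ?_, ?_⟩
    · intro e he; simp at he; subst he; exact hmS.2
    · intro e he e' h1 h2
      simp at he; subst he
      exact hmin' e' (h1.trans hmS.1) h2
  · have hms : tgt m ≠ s := hdag.2.1 m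
    obtain ⟨e', he', hpos'⟩ := exists_out_pos hdag hf hms hmt (e := m) rfl hmS.2
    obtain ⟨l, hne, hch, hhead, hlast, hposl, hminl⟩ :=
      IH (tgt m) (Relation.TransGen.single ⟨m, hmS.1, rfl⟩) ⟨e', he', hpos'⟩
    refine ⟨m :: l, by simp, ?_, by simpa using hmS.1, ?_, ?_, ?_⟩
    · refine List.IsChain.cons hch ?_
      intro y hy
      rw [List.head?_eq_head hne] at hy
      cases hy
      exact hhead.symm
    · rwa [List.getLast_cons hne]
    · intro e he
      rcases List.mem_cons.mp he with rfl | he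
      exacts [hmS.2, hposl e he]
    · intro e he e' h1 h2
      rcases List.mem_cons.mp he with rfl | he
      · exact hmin' e' (h1.trans hmS.1) h2
      · exact hminl e he e' h1 h2

end WF


lemma supp_pos (hdag : IsDAG src tgt s t) {f : E → ℝ} {π : GPath src tgt s t → ℝ}
    (hπ : IsPathDecomp src tgt s t f π) {P : GPath src tgt s t} (hP : π P ≠ 0)
    {e : E} (he : e ∈ P.edges) : 0 < f e := by
  haveI : Finite (GPath src tgt s t) := gpath_finite hdag
  haveI := Fintype.ofFinite (GPath src tgt s t)
  have h0 : 0 < π P := lt_of_le_of_ne (hπ.1 P) (Ne.symm hP)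
  have hsum := hπ.2 e
  rw [finsum_eq_sum_of_fintype] at hsum
  rw [hsum]
  calc (0:ℝ) < π P := h0
    _ = (if e ∈ P.edges then π P else 0) := by rw [if_pos he]
    _ ≤ ∑ Q : GPath src tgt s t, (if e ∈ Q.edges then π Q else 0) :=
        Finset.single_le_sum (f := fun Q => if e ∈ Q.edges then π Q else 0)
          (fun Q _ => by by_cases h : e ∈ Q.edges <;> simp [h, hπ.1 Q]) (Finset.mem_univ P)

lemma walk_unique (hdag : IsDAG src tgt s t) {tri : E → E → Prop}
    (htri : IsLinearOrder E tri) {f : E → ℝ} :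
    ∀ (l : List E) (l' : List E) (hne : l ≠ []) (hne' : l' ≠ []),
      l.Chain' (fun e f => tgt e = src f) → l'.Chain' (fun e f => tgt e = src f) →
      (∀ e ∈ l, 0 < f e) → (∀ e ∈ l', 0 < f e) →
      (∀ e ∈ l, ∀ e', src e' = src e → 0 < f e' → tri e' e) →
      (∀ e ∈ l', ∀ e', src e' = src e → 0 < f e' → tri e' e) →
      src (l.head hne) = src (l'.head hne') →
      tgt (l.getLast hne) = t → tgt (l'.getLast hne') = t → l = l' := by
  haveI := htri
  intro l
  induction l with
  | nil => intro l' hne; exact absurd rfl hne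
  | cons e r ih =>
    intro l' _ hne'
    cases l' with
    | nil => exact absurd rfl hne'
    | cons e' r' =>
      intro hc hc' hpos hpos' hmin hmin' hhead hlast hlast'
      have hsrc : src e = src e' := by simpa using hhead
      have he2 : e = e' := by
        have h1 : tri e' e := hmin e (by simp) e' hsrc.symm (hpos' e' (by simp))
        have h2 : tri e e' := hmin' e' (by simp) e hsrc (hpos e (by simp))
        exact antisymm_of tri h2 h1
      subst he2
      have hrr : r = r' := by
        cases r with
        | nil =>
          have het : tgt e = t := by simpa using hlast
          cases r' with
          | nil => rfl
          | cons g r2 =>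
            exfalso
            have hg : tgt e = src g := (List.isChain_cons_cons.mp hc').1
            exact hdag.2.2.1 g (hg ▸ het)
        | cons g r2 =>
          cases r' with
          | nil =>
            exfalso
            have het : tgt e = t := by simpa using hlast'
            have hg : tgt e = src g := (List.isChain_cons_cons.mp hc).1
            exact hdag.2.2.1 g (hg ▸ het)
          | cons g' r2' =>
            refine ih (g' :: r2') (by simp) (by simp)
              ((List.isChain_cons_cons.mp hc).2) ((List.isChain_cons_cons.mp hc').2)
              (fun x hx => hpos x (List.mem_cons_of_mem _ hx))
              (fun x hx => hpos' x (List.mem_cons_of_mem _ hx))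
              (fun x hx => hmin x (List.mem_cons_of_mem _ hx))
              (fun x hx => hmin' x (List.mem_cons_of_mem _ hx))
              ?_ ?_ ?_
            · have h1 : tgt e = src g := (List.isChain_cons_cons.mp hc).1
              have h2 : tgt e = src g' := (List.isChain_cons_cons.mp hc').1
              simpa using h1 ▸ h2
            · rw [← hlast]; simp [List.getLast_cons]
            · rw [← hlast']; simp [List.getLast_cons]
      rw [hrr]

lemma sum_indicator_tgt (hdag : IsDAG src tgt s t) (G : GPath src tgt s t) (w : ℝ) (n : N) :
    ∑ e : E, (if tgt e = n then (if e ∈ G.edges then w else 0) else 0)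
      = if ∃ e ∈ G.edges, tgt e = n then w else 0 := by
  by_cases hex : ∃ e ∈ G.edges, tgt e = n
  · obtain ⟨e₀, he₀, ht₀⟩ := hex
    rw [if_pos ⟨e₀, he₀, ht₀⟩, Finset.sum_eq_single e₀]
    · simp [ht₀, he₀]
    · intro e _ hne
      by_cases h1 : tgt e = n
      · by_cases h2 : e ∈ G.edges
        · exact absurd (tgt_injOn hdag G.chain h2 he₀ (h1.trans ht₀.symm)) hne
        · simp [h1, h2]
      · simp [h1]
    · intro h; exact absurd (Finset.mem_univ e₀) h
  · rw [if_neg hex]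
    refine Finset.sum_eq_zero fun e _ => ?_
    push_neg at hex
    by_cases h1 : tgt e = n
    · by_cases h2 : e ∈ G.edges
      · exact absurd h1 (hex e h2)
      · simp [h1, h2]
    · simp [h1]

lemma sum_indicator_src (hdag : IsDAG src tgt s t) (G : GPath src tgt s t) (w : ℝ) (n : N) :
    ∑ e : E, (if src e = n then (if e ∈ G.edges then w else 0) else 0)
      = if ∃ e ∈ G.edges, src e = n then w else 0 := by
  by_cases hex : ∃ e ∈ G.edges, src e = n
  · obtain ⟨e₀, he₀, ht₀⟩ := hex
    rw [if_pos ⟨e₀, he₀, ht₀⟩, Finset.sum_eq_single e₀]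
    · simp [ht₀, he₀]
    · intro e _ hne
      by_cases h1 : src e = n
      · by_cases h2 : e ∈ G.edges
        · exact absurd (src_injOn hdag G.chain h2 he₀ (h1.trans ht₀.symm)) hne
        · simp [h1, h2]
      · simp [h1]
    · intro h; exact absurd (Finset.mem_univ e₀) h
  · rw [if_neg hex]
    refine Finset.sum_eq_zero fun e _ => ?_
    push_neg at hex
    by_cases h1 : src e = n
    · by_cases h2 : e ∈ G.edges
      · exact absurd h1 (hex e h2)
      · simp [h1, h2]
    · simp [h1]

/-- subtracting `w` along a path preserves the quasi-flow property -/
lemma quasiflow_sub (hdag : IsDAG src tgt s t) {f : E → ℝ} (hf : IsQuasiFlow src tgt s t f)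
    (G : GPath src tgt s t) {w : ℝ} (hw0 : 0 ≤ w) (hw : ∀ e ∈ G.edges, w ≤ f e) :
    IsQuasiFlow src tgt s t (fun e => f e - if e ∈ G.edges then w else 0) := by
  constructor
  · intro e
    by_cases h : e ∈ G.edges
    · simp only [h, if_true]; linarith [hw e h]
    · simp only [h, if_false]; linarith [hf.1 e]
  · intro n hns hnt
    have hsplit : ∀ (g : E → N), (∑ e : E, if g e = n then
        (f e - if e ∈ G.edges then w else 0) else 0) =
        (∑ e : E, if g e = n then f e else 0) -
        (∑ e : E, if g e = n then (if e ∈ G.edges then w else 0) else 0) := by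
      intro g
      rw [← Finset.sum_sub_distrib]
      refine Finset.sum_congr rfl fun e _ => ?_
      by_cases h : g e = n <;> simp [h]
    rw [hsplit tgt, hsplit src, hf.2 n hns hnt, sum_indicator_tgt hdag,
      sum_indicator_src hdag]
    have hiff : (∃ e ∈ G.edges, tgt e = n) ↔ (∃ e ∈ G.edges, src e = n) := by
      constructor
      · rintro ⟨e, he, h⟩
        obtain ⟨e', he', h'⟩ := exists_src_of_tgt hdag hnt he h
        exact ⟨e', he', h'⟩
      · rintro ⟨e, he, h⟩
        obtain ⟨e', he', h'⟩ := exists_tgt_of_src hdag hns he h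
        exact ⟨e', he', h'⟩
    by_cases hex : ∃ e ∈ G.edges, tgt e = n
    · rw [if_pos hex, if_pos (hiff.mp hex)]
    · rw [if_neg hex, if_neg (fun h => hex (hiff.mpr h))]

lemma exists_decomp (hdag : IsDAG src tgt s t) {tri : E → E → Prop}
    (htri : IsLinearOrder E tri) :
    ∀ (k : ℕ) (f : E → ℝ), IsQuasiFlow src tgt s t f →
      (Finset.univ.filter fun e => f e ≠ 0).card ≤ k →
      ∃ π, IsPathDecomp src tgt s t f π ∧ SwapProgG src tgt s t tri π := by
  haveI : Finite (GPath src tgt s t) := gpath_finite hdag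
  haveI := Fintype.ofFinite (GPath src tgt s t)
  intro k
  induction k with
  | zero =>
    intro f hf hcard
    have h0 : ∀ e, f e = 0 := by
      intro e
      by_contra h
      have : e ∈ Finset.univ.filter fun e => f e ≠ 0 := by simp [h]
      have := Finset.card_pos.mpr ⟨e, this⟩
      omega
    refine ⟨fun _ => 0, ⟨fun P => le_refl 0, fun e => by rw [h0 e]; simp⟩,
      0, Fin.elim0, fun i => i.elim0, ?_, fun i => i.elim0⟩
    ext P
    simp
  | succ k ihk =>
    intro f hf hcard
    by_cases h0 : ∀ e, f e = 0
    · refine ⟨fun _ => 0, ⟨fun P => le_refl 0, fun e => by rw [h0 e]; simp⟩,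
        0, Fin.elim0, fun i => i.elim0, ?_, fun i => i.elim0⟩
      ext P
      simp
    · push_neg at h0
      obtain ⟨e₀, he₀⟩ := h0
      have he₀pos : 0 < f e₀ := lt_of_le_of_ne (hf.1 e₀) (Ne.symm he₀)
      obtain ⟨es, hes, hespos⟩ := exists_start hdag hf (src e₀) ⟨e₀, rfl, he₀pos⟩
      obtain ⟨l, hne, hch, hhead, hlast, hposl, hminl⟩ :=
        greedy_walk hdag hf htri s ⟨es, hes, hespos⟩
      set G : GPath src tgt s t := ⟨l, hne, hch, hhead, hlast⟩ with hG
      have hGedges : G.edges = l := rfl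
      obtain ⟨estar, hestar, hminstar⟩ :=
        Finset.exists_min_image l.toFinset f ⟨(l.head hne),
          List.mem_toFinset.mpr (List.head_mem hne)⟩
      rw [List.mem_toFinset] at hestar
      set w := f estar with hw
      have hwpos : 0 < w := hposl estar hestar
      have hwle : ∀ e ∈ G.edges, w ≤ f e := fun e he =>
        hminstar e (List.mem_toFinset.mpr he)
      set f' := fun e => f e - if e ∈ G.edges then w else 0 with hf'def
      have hf' : IsQuasiFlow src tgt s t f' := quasiflow_sub hdag hf G hwpos.le hwle
      have hf'star : f' estar = 0 := by
        show f estar - (if estar ∈ G.edges then w else 0) = 0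
        rw [if_pos hestar, hw]
        ring
      have hf'le : ∀ e, f' e ≤ f e := by
        intro e
        simp only [hf'def]
        by_cases h : e ∈ G.edges <;> simp [h] <;> linarith
      have hcard' : (Finset.univ.filter fun e => f' e ≠ 0).card ≤ k := by
        have hsubset : (Finset.univ.filter fun e => f' e ≠ 0) ⊆
            (Finset.univ.filter fun e => f e ≠ 0).erase estar := by
          intro e he
          simp only [Finset.mem_filter, Finset.mem_univ, true_and] at he
          rw [Finset.mem_erase]
          constructor
          · rintro rfl
            exact he hf'star
          · simp only [Finset.mem_filter, Finset.mem_univ, true_and]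
            by_cases h : e ∈ G.edges
            · exact ne_of_gt (hposl e h)
            · simpa [hf'def, h] using he
        have h1 := Finset.card_le_card hsubset
        have h2 := Finset.card_erase_of_mem (a := estar)
          (s := Finset.univ.filter fun e => f e ≠ 0) (by simp [ne_of_gt hwpos, hw]; exact ne_of_gt hwpos)
        have h3 := Finset.card_pos.mpr
          ⟨estar, (by simp [ne_of_gt hwpos, hw]; exact ne_of_gt hwpos :
            estar ∈ Finset.univ.filter fun e => f e ≠ 0)⟩
        omega
      obtain ⟨π', hd', hs'⟩ := ihk f' hf' hcard'
      obtain ⟨K', en', hinj', hrange', hord'⟩ := hs'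
      have hGnot : G ∉ Set.range en' := by
        rw [hrange']
        intro hGsupp
        have := supp_pos hdag hd' hGsupp hestar
        rw [hf'star] at this
        exact lt_irrefl 0 this
      have hπ'G : π' G = 0 := by
        by_contra h
        exact hGnot (hrange' ▸ h)
      refine ⟨fun P => π' P + if P = G then w else 0, ⟨?_, ?_⟩,
        K' + 1, Fin.cases G en', ?_, ?_, ?_⟩
      · intro P
        by_cases h : P = G <;> simp [h] <;> [skip; exact hd'.1 P]
        have := hd'.1 P
        linarith
      · intro e
        rw [finsum_eq_sum_of_fintype]
        have hterm : ∀ P : GPath src tgt s t,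
            (if e ∈ P.edges then (π' P + if P = G then w else 0) else 0) =
            (if e ∈ P.edges then π' P else 0) +
            (if P = G then (if e ∈ G.edges then w else 0) else 0) := by
          intro P
          by_cases h1 : P = G
          · subst h1
            by_cases h2 : e ∈ G.edges <;> simp [h2]
          · by_cases h2 : e ∈ P.edges <;> simp [h1, h2]
        rw [Finset.sum_congr rfl fun P _ => hterm P, Finset.sum_add_distrib,
          Finset.sum_ite_eq' Finset.univ G
            (fun _ => if e ∈ G.edges then w else 0)]
        have := hd'.2 e
        rw [finsum_eq_sum_of_fintype] at this
        rw [← this]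
        simp only [hf'def, Finset.mem_univ, if_true]
        ring
      · intro i j hij
        rcases Fin.eq_zero_or_eq_succ i with rfl | ⟨i', rfl⟩ <;>
          rcases Fin.eq_zero_or_eq_succ j with rfl | ⟨j', rfl⟩
        · rfl
        · simp only [Fin.cases_zero, Fin.cases_succ] at hij
          exact absurd ⟨j', hij.symm⟩ hGnot
        · simp only [Fin.cases_zero, Fin.cases_succ] at hij
          exact absurd ⟨i', hij⟩ hGnot
        · simp only [Fin.cases_succ] at hij
          rw [hinj' hij]
      · ext P
        simp only [Set.mem_range, Set.mem_setOf_eq]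
        constructor
        · rintro ⟨i, rfl⟩
          rcases Fin.eq_zero_or_eq_succ i with rfl | ⟨i', rfl⟩
          · simp only [Fin.cases_zero]
            simp [hπ'G]
            exact ne_of_gt hwpos
          · simp only [Fin.cases_succ]
            have hPsupp : π' (en' i') ≠ 0 := by
              have : en' i' ∈ Set.range en' := ⟨i', rfl⟩
              rwa [hrange'] at this
            have hPG : en' i' ≠ G := fun h => hGnot (h ▸ Set.mem_range_self i')
            simpa [hPG] using hPsupp
        · intro hP
          by_cases hPG : P = G
          · exact ⟨0, by simp [hPG]⟩
          · have h1 : π' P ≠ 0 := by simpa [hPG] using hP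
            have h2 : P ∈ Set.range en' := by rw [hrange']; exact h1
            obtain ⟨i', rfl⟩ := h2
            exact ⟨i'.succ, by simp⟩
      · intro i j hij n e₁ e₂ h1 h2 hs1 hs2
        rcases Fin.eq_zero_or_eq_succ i with rfl | ⟨i', rfl⟩
        · exact absurd hij (by simp)
        · rcases Fin.eq_zero_or_eq_succ j with rfl | ⟨j', rfl⟩
          · simp only [Fin.cases_zero] at h2
            simp only [Fin.cases_succ] at h1
            have hPsupp : π' (en' i') ≠ 0 := by
              have : en' i' ∈ Set.range en' := ⟨i', rfl⟩
              rwa [hrange'] at this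
            have hposf' : 0 < f' e₁ := supp_pos hdag hd' hPsupp h1
            have hposf : 0 < f e₁ := lt_of_lt_of_le hposf' (hf'le e₁)
            exact hminl e₂ h2 e₁ (hs1.trans hs2.symm) hposf
          · simp only [Fin.cases_succ] at h1 h2
            exact hord' i' j' (by exact Fin.succ_lt_succ_iff.mp hij) n e₁ e₂ h1 h2 hs1 hs2

lemma supp_empty (hdag : IsDAG src tgt s t) {f : E → ℝ} {π π' : GPath src tgt s t → ℝ}
    (hπ : IsPathDecomp src tgt s t f π) (hπ' : IsPathDecomp src tgt s t f π')
    (h : ∀ P, π P = 0) : ∀ P, π' P = 0 := by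
  haveI : Finite (GPath src tgt s t) := gpath_finite hdag
  haveI := Fintype.ofFinite (GPath src tgt s t)
  intro P
  by_contra hP
  have hpos := supp_pos hdag hπ' hP (List.head_mem P.ne)
  have hzero : f (P.edges.head P.ne) = 0 := by
    rw [hπ.2, finsum_eq_sum_of_fintype]
    exact Finset.sum_eq_zero fun Q _ => by simp [h Q]
  rw [hzero] at hpos
  exact lt_irrefl 0 hpos

lemma decomp_sub (hdag : IsDAG src tgt s t) {f : E → ℝ} {π : GPath src tgt s t → ℝ}
    (hd : IsPathDecomp src tgt s t f π) (G : GPath src tgt s t) {m : ℝ}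
    (hmle : m ≤ π G) :
    IsPathDecomp src tgt s t (fun e => f e - if e ∈ G.edges then m else 0)
      (fun P => π P - if P = G then m else 0) := by
  haveI : Finite (GPath src tgt s t) := gpath_finite hdag
  haveI := Fintype.ofFinite (GPath src tgt s t)
  constructor
  · intro P
    dsimp only
    by_cases h : P = G
    · rw [if_pos h, h]; linarith
    · rw [if_neg h]; have := hd.1 P; linarith
  · intro e
    rw [finsum_eq_sum_of_fintype]
    have hterm : ∀ P : GPath src tgt s t,
        (if e ∈ P.edges then (π P - if P = G then m else 0) else 0) =
        (if e ∈ P.edges then π P else 0) -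
        (if P = G then (if e ∈ G.edges then m else 0) else 0) := by
      intro P
      by_cases h1 : P = G
      · subst h1
        by_cases h2 : e ∈ P.edges <;> simp [h2]
      · by_cases h2 : e ∈ P.edges <;> simp [h1, h2]
    rw [Finset.sum_congr rfl fun P _ => hterm P, Finset.sum_sub_distrib,
      Finset.sum_ite_eq' Finset.univ G (fun _ => if e ∈ G.edges then m else 0)]
    have h2 := hd.2 e
    rw [finsum_eq_sum_of_fintype] at h2
    rw [← h2]
    simp

lemma decomp_unique (hdag : IsDAG src tgt s t) {tri : E → E → Prop}
    (htri : IsLinearOrder E tri) :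
    ∀ (k : ℕ) (f : E → ℝ) (π π' : GPath src tgt s t → ℝ),
      IsPathDecomp src tgt s t f π → SwapProgG src tgt s t tri π →
      IsPathDecomp src tgt s t f π' → SwapProgG src tgt s t tri π' →
      {P | π P ≠ 0}.ncard + {P | π' P ≠ 0}.ncard ≤ k → π = π' := by
  haveI : Finite (GPath src tgt s t) := gpath_finite hdag
  haveI := Fintype.ofFinite (GPath src tgt s t)
  haveI := htri
  intro k
  induction k with
  | zero =>
    intro f π π' hd hs hd' hs' hcard
    have h1 : {P | π P ≠ 0} = ∅ :=
      Set.ncard_eq_zero (Set.toFinite _) |>.mp (by omega)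
    have h2 : {P | π' P ≠ 0} = ∅ :=
      Set.ncard_eq_zero (Set.toFinite _) |>.mp (by omega)
    funext P
    have hP1 : π P = 0 := by by_contra h; exact absurd (h1 ▸ (show P ∈ {P | π P ≠ 0} from h)) (Set.notMem_empty P)
    have hP2 : π' P = 0 := by by_contra h; exact absurd (h2 ▸ (show P ∈ {P | π' P ≠ 0} from h)) (Set.notMem_empty P)
    rw [hP1, hP2]
  | succ k ihk =>
    intro f π π' hd hs hd' hs' hcard
    by_cases hsupp : ∀ P, π P = 0
    · have h2 := supp_empty hdag hd hd' hsupp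
      funext P
      rw [hsupp P, h2 P]
    · push_neg at hsupp
      obtain ⟨P₀, hP₀⟩ := hsupp
      obtain ⟨K, en, hinj, hrange, hord⟩ := hs
      obtain ⟨K', en', hinj', hrange', hord'⟩ := hs'
      -- K, K' positive
      obtain ⟨K₀, rfl⟩ : ∃ K₀, K = K₀ + 1 := by
        rcases K with _ | K₀
        · exfalso
          have : P₀ ∈ Set.range en := hrange ▸ hP₀
          obtain ⟨i, _⟩ := this
          exact i.elim0
        · exact ⟨K₀, rfl⟩
      obtain ⟨K₀', rfl⟩ : ∃ K₀', K' = K₀' + 1 := by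
        rcases K' with _ | K₀'
        · exfalso
          have hP₀' : π' P₀ ≠ 0 := by
            intro h
            exact hP₀ (supp_empty hdag hd' hd (by
              intro P
              by_contra hP
              have : P ∈ Set.range en' := hrange' ▸ hP
              obtain ⟨i, _⟩ := this
              exact i.elim0) P₀)
          have : P₀ ∈ Set.range en' := hrange' ▸ hP₀'
          obtain ⟨i, _⟩ := this
          exact i.elim0
        · exact ⟨K₀', rfl⟩
      set G : GPath src tgt s t := en 0 with hGdef
      set G' : GPath src tgt s t := en' 0 with hG'def
      have hGsupp : π G ≠ 0 := by
        have : G ∈ Set.range en := ⟨0, rfl⟩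
        rwa [hrange] at this
      have hG'supp : π' G' ≠ 0 := by
        have : G' ∈ Set.range en' := ⟨0, rfl⟩
        rwa [hrange'] at this
      -- greedy property of the first path of an enumeration
      have hfirstmin : ∀ (ρ : GPath src tgt s t → ℝ) (M : ℕ)
          (enn : Fin (M+1) → GPath src tgt s t),
          IsPathDecomp src tgt s t f ρ →
          Set.range enn = {P | ρ P ≠ 0} →
          (∀ i j : Fin (M+1), j < i → ∀ (n : N) (e₁ e₂ : E),
            e₁ ∈ (enn i).edges → e₂ ∈ (enn j).edges → src e₁ = n → src e₂ = n →
              tri e₁ e₂) →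
          ∀ e ∈ (enn 0).edges, ∀ e', src e' = src e → 0 < f e' → tri e' e := by
        intro ρ M enn hdd hrg hod e he e' hsrc hpos
        have hex : ∃ P, ρ P ≠ 0 ∧ e' ∈ P.edges := by
          by_contra hco
          push_neg at hco
          have : f e' = 0 := by
            rw [hdd.2 e', finsum_eq_sum_of_fintype]
            refine Finset.sum_eq_zero fun Q _ => ?_
            rcases em (ρ Q = 0) with h | h
            · simp [h]
            · simp [hco Q h]
          rw [this] at hpos
          exact lt_irrefl 0 hpos
        obtain ⟨P, hPne, heP⟩ := hex
        have : P ∈ Set.range enn := hrg ▸ hPne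
        obtain ⟨i, rfl⟩ := this
        rcases eq_or_ne i 0 with rfl | hi0
        · rw [src_injOn hdag (enn 0).chain heP he hsrc]
          exact refl_of tri e
        · exact hod i 0 (Fin.pos_of_ne_zero hi0) (src e) e' e heP he hsrc rfl
      have hGpos : ∀ e ∈ G.edges, 0 < f e := fun e he => supp_pos hdag hd hGsupp he
      have hG'pos : ∀ e ∈ G'.edges, 0 < f e := fun e he => supp_pos hdag hd' hG'supp he
      have hGG' : G = G' := by
        have h1 := hfirstmin π K₀ en hd hrange hord
        have h2 := hfirstmin π' K₀' en' hd' hrange' hord'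
        have h3 := walk_unique hdag htri (f := f) G.edges G'.edges G.ne G'.ne
          G.chain G'.chain hGpos hG'pos h1 h2
          (by rw [G.first, G'.first]) G.last G'.last
        exact gpath_ext h3
      rw [← hGG'] at hG'supp
      clear hG'def
      -- subtract the common minimum weight along G
      set m := min (π G) (π' G) with hm
      have hm1 : m ≤ π G := min_le_left _ _
      have hm2 : m ≤ π' G := min_le_right _ _
      have hmpos : 0 < m := lt_min (lt_of_le_of_ne (hd.1 G) (Ne.symm hGsupp))
        (lt_of_le_of_ne (hd'.1 G) (Ne.symm hG'supp))
      set π₂ := fun P => π P - if P = G then m else 0 with hπ₂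
      set π₂' := fun P => π' P - if P = G then m else 0 with hπ₂'
      have hd₂ := decomp_sub hdag hd G hm1
      have hd₂' := decomp_sub hdag hd' G hm2
      -- swap-progressiveness is preserved under removing weight from the first path
      have hsp : ∀ (ρ : GPath src tgt s t → ℝ) (M : ℕ)
          (enn : Fin (M+1) → GPath src tgt s t), Function.Injective enn →
          Set.range enn = {P | ρ P ≠ 0} →
          (∀ i j : Fin (M+1), j < i → ∀ (n : N) (e₁ e₂ : E),
            e₁ ∈ (enn i).edges → e₂ ∈ (enn j).edges → src e₁ = n → src e₂ = n →
              tri e₁ e₂) →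
          enn 0 = G →
          SwapProgG src tgt s t tri (fun P => ρ P - if P = G then m else 0) := by
        intro ρ M enn hin hrg hod h0
        by_cases hcase : ρ G = m
        · refine ⟨M, fun i => enn i.succ, fun i j hij => ?_, ?_, ?_⟩
          · exact Fin.succ_injective _ (hin hij)
          · ext P
            simp only [Set.mem_range, Set.mem_setOf_eq]
            constructor
            · rintro ⟨i, rfl⟩
              have hne0 : enn i.succ ≠ G := by
                rw [← h0]
                intro h
                exact absurd (hin h) (Fin.succ_ne_zero i)
              have : enn i.succ ∈ Set.range enn := ⟨i.succ, rfl⟩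
              rw [hrg] at this
              simpa [hne0] using this
            · intro hP
              by_cases hPG : P = G
              · exfalso
                apply hP
                rw [hPG, if_pos rfl, hcase]
                ring
              · have : ρ P ≠ 0 := by simpa [hPG] using hP
                have : P ∈ Set.range enn := hrg ▸ this
                obtain ⟨i, rfl⟩ := this
                have hi0 : i ≠ 0 := by rintro rfl; exact hPG h0
                obtain ⟨i', rfl⟩ := Fin.eq_succ_of_ne_zero hi0
                exact ⟨i', rfl⟩
          · intro i j hij n e₁ e₂ h1 h2 hs1 hs2
            exact hod i.succ j.succ (Fin.succ_lt_succ_iff.mpr hij) n e₁ e₂ h1 h2 hs1 hs2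
        · refine ⟨M + 1, enn, hin, ?_, hod⟩
          rw [hrg]
          ext P
          simp only [Set.mem_setOf_eq]
          by_cases hPG : P = G
          · subst hPG
            simp only [if_pos rfl]
            have hGρ : ρ G ≠ 0 := by
              have : G ∈ Set.range enn := ⟨0, h0⟩
              rwa [hrg] at this
            constructor
            · intro _
              exact sub_ne_zero.mpr hcase
            · intro _
              exact hGρ
          · simp [hPG]
      have hsπ₂ : SwapProgG src tgt s t tri π₂ :=
        hsp π K₀ en hinj hrange hord rfl
      have hsπ₂' : SwapProgG src tgt s t tri π₂' :=
        hsp π' K₀' en' hinj' hrange' hord' hGG'.symm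
      have hsub2 : {P | π₂ P ≠ 0} ⊆ {P | π P ≠ 0} := by
        intro P hP
        simp only [Set.mem_setOf_eq, hπ₂] at hP ⊢
        by_cases h : P = G
        · subst h; exact hGsupp
        · simpa [h] using hP
      have hsub2' : {P | π₂' P ≠ 0} ⊆ {P | π' P ≠ 0} := by
        intro P hP
        simp only [Set.mem_setOf_eq, hπ₂'] at hP ⊢
        by_cases h : P = G
        · subst h; exact hG'supp
        · simpa [h] using hP
      have hG2 : π₂ G = 0 ∨ π₂' G = 0 := by
        rcases le_total (π G) (π' G) with h | h
        · left; simp [hπ₂, hm, min_eq_left h]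
        · right; simp [hπ₂', hm, min_eq_right h]
      have hlt : {P | π₂ P ≠ 0}.ncard + {P | π₂' P ≠ 0}.ncard ≤ k := by
        rcases hG2 with h | h
        · have hne : {P | π₂ P ≠ 0} ⊆ {P | π P ≠ 0} \ {G} := by
            intro P hP
            refine ⟨hsub2 hP, ?_⟩
            rintro rfl
            exact hP h
          have hc1 : {P | π₂ P ≠ 0}.ncard ≤ ({P | π P ≠ 0} \ {G}).ncard :=
            Set.ncard_le_ncard hne (Set.toFinite _)
          have hc2 : ({P | π P ≠ 0} \ {G}).ncard < {P | π P ≠ 0}.ncard :=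
            Set.ncard_diff_singleton_lt_of_mem hGsupp (Set.toFinite _)
          have hc3 : {P | π₂' P ≠ 0}.ncard ≤ {P | π' P ≠ 0}.ncard :=
            Set.ncard_le_ncard hsub2' (Set.toFinite _)
          omega
        · have hne : {P | π₂' P ≠ 0} ⊆ {P | π' P ≠ 0} \ {G} := by
            intro P hP
            refine ⟨hsub2' hP, ?_⟩
            rintro rfl
            exact hP h
          have hc1 : {P | π₂' P ≠ 0}.ncard ≤ ({P | π' P ≠ 0} \ {G}).ncard :=
            Set.ncard_le_ncard hne (Set.toFinite _)
          have hc2 : ({P | π' P ≠ 0} \ {G}).ncard < {P | π' P ≠ 0}.ncard :=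
            Set.ncard_diff_singleton_lt_of_mem hG'supp (Set.toFinite _)
          have hc3 : {P | π₂ P ≠ 0}.ncard ≤ {P | π P ≠ 0}.ncard :=
            Set.ncard_le_ncard hsub2 (Set.toFinite _)
          omega
      have hmain := ihk (fun e => f e - if e ∈ G.edges then m else 0) π₂ π₂'
        hd₂ hsπ₂ hd₂' hsπ₂' hlt
      funext P
      have hPP : π P - (if P = G then m else 0) = π' P - (if P = G then m else 0) :=
        congrFun hmain P
      linarith

theorem statement18 (hdag : IsDAG src tgt s t) (f : E → ℝ)
    (hf : IsQuasiFlow src tgt s t f)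
    (tri : E → E → Prop) (htri : IsLinearOrder E tri) :
    ∃! π : GPath src tgt s t → ℝ,
      IsPathDecomp src tgt s t f π ∧ SwapProgG src tgt s t tri π := by
  obtain ⟨π, hπ⟩ := exists_decomp hdag htri
    ((Finset.univ.filter fun e => f e ≠ 0).card) f hf le_rfl
  refine ⟨π, hπ, ?_⟩
  intro π' hπ'
  exact decomp_unique hdag htri ({P | π' P ≠ 0}.ncard + {P | π P ≠ 0}.ncard)
    f π' π hπ'.1 hπ'.2 hπ.1 hπ.2 le_rfl

end StmtDAG
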